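/- Fix R > 0. Let η = diag(−1,1,1,1) be the Minkowski metric on ℝ⁴, write x_μ = η_{μν}x^ν, and let U := {x ∈ ℝ⁴ : (x⁰)² − (x¹)² − (x²)² − (x³)² > R²}. Define s(x) := √((x⁰)² − (x¹)² − (x²)² − (x³)² − R²)/R (so s > 0 on U), let V⁰,…,V³: U → ℝ be C¹, and define the lift V⁴ := −(Σ_μ x_μ V^μ)/(R·s). Let D := Σ_σ x^σ ∂_σ denote the radial derivative. Then for every x ∈ U the identity Σ_μ ∂_μ V^μ + R⁻²·Σ_μ x_μ·(D V^μ) + (s/R)·(D V⁴) = s·Σ_μ ∂_μ(V^μ/s) holds. In particular, the lifted vector field (V^μ, V⁴) is divergence-free on the hyperboloid, i.e. the left-hand side vanishes, if and only if Σ_μ ∂_μ(s⁻¹·V^μ) = 0. -/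

import Mathlib

open Real Set

set_option maxHeartbeats 1600000

/-- The partial derivative `∂_μ f x` of a scalar function on `ℝ⁴`. -/
noncomputable def pd (μ : Fin 4) (f : (Fin 4 → ℝ) → ℝ) (x : Fin 4 → ℝ) : ℝ :=
  fderiv ℝ f x (Pi.single μ 1)

/-- The radial derivative `D f = ∑_σ x^σ ∂_σ f`. -/
noncomputable def Dop (f : (Fin 4 → ℝ) → ℝ) (x : Fin 4 → ℝ) : ℝ :=
  ∑ σ : Fin 4, x σ * pd σ f x

/-- Lowered index: `x_μ = η_{μν}x^ν` with `η = diag(−1,1,1,1)`. -/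
def low (x : Fin 4 → ℝ) (μ : Fin 4) : ℝ := if μ = 0 then -x 0 else x μ

/-- The Minkowski quadratic form `(x⁰)² − (x¹)² − (x²)² − (x³)²`. -/
def quad (x : Fin 4 → ℝ) : ℝ := x 0 ^ 2 - x 1 ^ 2 - x 2 ^ 2 - x 3 ^ 2

/-- `U = {x ∈ ℝ⁴ : (x⁰)² − (x¹)² − (x²)² − (x³)² > R²}`. -/
def Ureg (R : ℝ) : Set (Fin 4 → ℝ) := {x | R ^ 2 < quad x}

/-- The cosmic scale factor `s(x) = √(quad x − R²)/R = sinh(η)`. -/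
noncomputable def scl (R : ℝ) (x : Fin 4 → ℝ) : ℝ := Real.sqrt (quad x - R ^ 2) / R

/-- The lift `V⁴ = −(∑_μ x_μ V^μ)/(R s)` of a vector field on `M^{3,1}` to the
hyperboloid `H⁴`. -/
noncomputable def lift4 (R : ℝ) (V : Fin 4 → (Fin 4 → ℝ) → ℝ) (x : Fin 4 → ℝ) : ℝ :=
  -(∑ μ : Fin 4, low x μ * V μ x) / (R * scl R x)

lemma hasFDerivAt_div' {E : Type*} [NormedAddCommGroup E] [NormedSpace ℝ E]
    {f g : E → ℝ} {f' g' : E →L[ℝ] ℝ} {x : E}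
    (hf : HasFDerivAt f f' x) (hg : HasFDerivAt g g' x) (hne : g x ≠ 0) :
    HasFDerivAt (fun y => f y / g y) (f x • (-(g x ^ 2)⁻¹ • g') + (g x)⁻¹ • f') x := by
  have hinv : HasFDerivAt (fun y => (g y)⁻¹) ((-(g x ^ 2)⁻¹) • g') x :=
    (hasDerivAt_inv hne).comp_hasFDerivAt x hg
  simpa only [div_eq_mul_inv, Pi.mul_def] using hf.mul hinv

/-- Fix `R > 0`. For C¹ vector-field components `V⁰,…,V³` on
`U = {quad x > R²}`, with lift `V⁴ = −(∑ x_μ V^μ)/(Rs)`, the tangential divergence on the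
hyperboloid satisfies the identity
`∑_μ ∂_μ V^μ + R⁻² ∑_μ x_μ (D V^μ) + (s/R)(D V⁴) = s·∑_μ ∂_μ(V^μ/s)` on `U`;
in particular the lift is divergence-free on `H⁴` iff `∑_μ ∂_μ(s⁻¹V^μ) = 0`. -/
theorem hyperboloid_divergence_identity
    (R : ℝ) (hR : 0 < R)
    (V : Fin 4 → (Fin 4 → ℝ) → ℝ)
    (hV : ∀ μ : Fin 4, ContDiffOn ℝ 1 (V μ) (Ureg R)) :
    ∀ x ∈ Ureg R,
      ((∑ μ : Fin 4, pd μ (V μ) x)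
          + (R ^ 2)⁻¹ * ∑ μ : Fin 4, low x μ * Dop (V μ) x
          + scl R x / R * Dop (lift4 R V) x
        = scl R x * ∑ μ : Fin 4, pd μ (fun y => V μ y / scl R y) x) ∧
      (((∑ μ : Fin 4, pd μ (V μ) x)
          + (R ^ 2)⁻¹ * ∑ μ : Fin 4, low x μ * Dop (V μ) x
          + scl R x / R * Dop (lift4 R V) x = 0)
        ↔ ∑ μ : Fin 4, pd μ (fun y => (scl R y)⁻¹ * V μ y) x = 0) := by
  have hcq : Continuous quad := by unfold quad; fun_prop
  have hUopen : IsOpen (Ureg R) := isOpen_lt continuous_const hcq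
  intro x hx
  have hq : R ^ 2 < quad x := hx
  have hqpos : 0 < quad x - R ^ 2 := by linarith
  have hs : 0 < scl R x := div_pos (Real.sqrt_pos.mpr hqpos) hR
  have hsqrt : Real.sqrt (quad x - R ^ 2) = R * scl R x := by
    rw [scl]; field_simp
  have hkey : R ^ 2 * scl R x ^ 2 = quad x - R ^ 2 := by
    have h := Real.sq_sqrt hqpos.le
    rw [hsqrt] at h; nlinarith [h]
  have hVd : ∀ μ, DifferentiableAt ℝ (V μ) x := fun μ =>
    ((hV μ).differentiableOn one_ne_zero).differentiableAt (hUopen.mem_nhds hx)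
  have hVf : ∀ μ, HasFDerivAt (V μ) (fderiv ℝ (V μ) x) x := fun μ => (hVd μ).hasFDerivAt
  have hproj : ∀ i : Fin 4, HasFDerivAt (fun y : Fin 4 → ℝ => y i)
      (ContinuousLinearMap.proj i : (Fin 4 → ℝ) →L[ℝ] ℝ) x :=
    fun i => by
      exact (ContinuousLinearMap.proj (R := ℝ) (φ := fun _ : Fin 4 => ℝ) i).hasFDerivAt (x := x)
  have hquadF : HasFDerivAt quad
      ((x 0 • (ContinuousLinearMap.proj 0 : (Fin 4 → ℝ) →L[ℝ] ℝ)
          + x 0 • ContinuousLinearMap.proj 0)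
        - (x 1 • ContinuousLinearMap.proj 1 + x 1 • ContinuousLinearMap.proj 1)
        - (x 2 • ContinuousLinearMap.proj 2 + x 2 • ContinuousLinearMap.proj 2)
        - (x 3 • ContinuousLinearMap.proj 3 + x 3 • ContinuousLinearMap.proj 3)) x := by
    have hqdef : quad = fun y : Fin 4 → ℝ => y 0 * y 0 - y 1 * y 1 - y 2 * y 2 - y 3 * y 3 := by
      funext y; simp only [quad]; ring
    rw [hqdef]
    exact ((((hproj 0).mul (hproj 0)).sub ((hproj 1).mul (hproj 1))).sub
      ((hproj 2).mul (hproj 2))).sub ((hproj 3).mul (hproj 3))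
  have hsclF0 : HasFDerivAt (scl R)
      ((1 / R) • ((1 / (2 * Real.sqrt (quad x - R ^ 2))) •
        ((x 0 • (ContinuousLinearMap.proj 0 : (Fin 4 → ℝ) →L[ℝ] ℝ)
            + x 0 • ContinuousLinearMap.proj 0)
          - (x 1 • ContinuousLinearMap.proj 1 + x 1 • ContinuousLinearMap.proj 1)
          - (x 2 • ContinuousLinearMap.proj 2 + x 2 • ContinuousLinearMap.proj 2)
          - (x 3 • ContinuousLinearMap.proj 3 + x 3 • ContinuousLinearMap.proj 3)))) x := by
    have h1 := (hquadF.sub_const (R ^ 2)).sqrt (by simpa using hqpos.ne')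
    have h2 := h1.const_mul (1 / R)
    have hsdef : scl R = fun y => (1 / R) * Real.sqrt (quad y - R ^ 2) := by
      funext y; rw [scl]; ring
    rw [hsdef]
    simpa using h2
  have pdscl0 : ∀ σ : Fin 4, pd σ (scl R) x = -(low x σ) / (R ^ 2 * scl R x) := by
    intro σ
    rw [pd, hsclF0.fderiv]
    fin_cases σ <;>
      simp [ContinuousLinearMap.smul_apply, ContinuousLinearMap.sub_apply,
        ContinuousLinearMap.add_apply, ContinuousLinearMap.proj_apply,
        Pi.single_apply, low, hsqrt] <;>
      field_simp <;> ring
  obtain ⟨Ls, hsclF, pdscl⟩ :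
      ∃ L : (Fin 4 → ℝ) →L[ℝ] ℝ, HasFDerivAt (scl R) L x ∧
        ∀ σ : Fin 4, pd σ (scl R) x = -(low x σ) / (R ^ 2 * scl R x) :=
    ⟨_, hsclF0, pdscl0⟩
  -- derivative of the lowered coordinates
  have hlow0 : ∀ μ : Fin 4, ∃ L : (Fin 4 → ℝ) →L[ℝ] ℝ,
      HasFDerivAt (fun y => low y μ) L x ∧
      ∀ σ : Fin 4, L (Pi.single σ 1)
        = if μ = σ then (if σ = 0 then (-1 : ℝ) else 1) else 0 := by
    intro μ
    by_cases h : μ = 0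
    · subst h
      refine ⟨-(ContinuousLinearMap.proj 0), ?_, ?_⟩
      · have he : (fun y : Fin 4 → ℝ => low y 0) = fun y => -(y 0) := by
          funext y; simp [low]
        rw [he]; exact (hproj 0).neg
      · intro σ
        fin_cases σ <;> simp [Pi.single_apply]
    · refine ⟨ContinuousLinearMap.proj μ, ?_, ?_⟩
      · have he : (fun y : Fin 4 → ℝ => low y μ) = fun y => y μ := by
          funext y; simp [low, h]
        rw [he]; exact hproj μ
      · intro σ
        by_cases hσ : μ = σ
        · subst hσ; simp [Pi.single_apply, h]
        · simp [Pi.single_apply, hσ, Ne.symm hσ]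
  choose ℓ hℓF hℓapp using hlow0
  have hNF : HasFDerivAt (fun y => ∑ μ : Fin 4, low y μ * V μ y)
      (∑ μ : Fin 4, (low x μ • fderiv ℝ (V μ) x + V μ x • ℓ μ)) x :=
    HasFDerivAt.fun_sum fun μ _ => (hℓF μ).mul (hVf μ)
  have hDN : Dop (fun y => ∑ μ : Fin 4, low y μ * V μ y) x
      = (∑ μ : Fin 4, low x μ * V μ x) + ∑ μ : Fin 4, low x μ * Dop (V μ) x := by
    simp only [Dop, pd, hNF.fderiv]
    simp only [ContinuousLinearMap.sum_apply, ContinuousLinearMap.add_apply,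
      ContinuousLinearMap.coe_smul', Pi.smul_apply, smul_eq_mul, hℓapp]
    simp only [Fin.sum_univ_four]
    simp [low]
    ring
  have hDscl : Dop (scl R) x = (R ^ 2 * scl R x ^ 2 + R ^ 2) / (R ^ 2 * scl R x) := by
    have hq2 : x 0 ^ 2 - x 1 ^ 2 - x 2 ^ 2 - x 3 ^ 2 = R ^ 2 * scl R x ^ 2 + R ^ 2 := by
      have h := hkey; simp only [quad] at h; linarith
    simp only [Dop, pdscl, Fin.sum_univ_four]
    simp [low]
    field_simp
    linear_combination hq2
  have hne : R * scl R x ≠ 0 := by positivity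
  have hliftF : HasFDerivAt (lift4 R V)
      ((-(∑ μ : Fin 4, low x μ * V μ x)) • (-((R * scl R x) ^ 2)⁻¹ • (R • Ls))
        + (R * scl R x)⁻¹ •
          (-(∑ μ : Fin 4, (low x μ • fderiv ℝ (V μ) x + V μ x • ℓ μ)))) x :=
    hasFDerivAt_div' hNF.neg (hsclF.const_mul R) hne
  have hDlift : Dop (lift4 R V) x
      = (-(∑ μ : Fin 4, low x μ * V μ x))
          * (-((R * scl R x) ^ 2)⁻¹ * (R * Dop (scl R) x))
        + (R * scl R x)⁻¹ * (-(Dop (fun y => ∑ μ : Fin 4, low y μ * V μ y) x)) := by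
    simp only [Dop, pd, hliftF.fderiv, hNF.fderiv, hsclF.fderiv]
    simp only [ContinuousLinearMap.add_apply, ContinuousLinearMap.neg_apply,
      ContinuousLinearMap.sum_apply, ContinuousLinearMap.coe_smul', Pi.smul_apply,
      smul_eq_mul]
    simp only [Fin.sum_univ_four]
    ring
  have hVdivF : ∀ μ : Fin 4, HasFDerivAt (fun y => V μ y / scl R y)
      (V μ x • (-(scl R x ^ 2)⁻¹ • Ls) + (scl R x)⁻¹ • fderiv ℝ (V μ) x) x :=
    fun μ => hasFDerivAt_div' (hVf μ) hsclF hs.ne'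
  have pdVdiv : ∀ μ : Fin 4, pd μ (fun y => V μ y / scl R y) x
      = V μ x * (-(scl R x ^ 2)⁻¹ * pd μ (scl R) x) + (scl R x)⁻¹ * pd μ (V μ) x := by
    intro μ
    simp only [pd, (hVdivF μ).fderiv, hsclF.fderiv, ContinuousLinearMap.add_apply,
      ContinuousLinearMap.coe_smul', Pi.smul_apply, smul_eq_mul]
  have hmain : (∑ μ : Fin 4, pd μ (V μ) x)
      + (R ^ 2)⁻¹ * ∑ μ : Fin 4, low x μ * Dop (V μ) x
      + scl R x / R * Dop (lift4 R V) x
      = scl R x * ∑ μ : Fin 4, pd μ (fun y => V μ y / scl R y) x := by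
    rw [hDlift, hDN, hDscl]
    simp only [pdVdiv, pdscl]
    simp only [Fin.sum_univ_four]
    simp [low]
    field_simp
    ring
  refine ⟨hmain, ?_⟩
  have hT : ∑ μ : Fin 4, pd μ (fun y => (scl R y)⁻¹ * V μ y) x
      = ∑ μ : Fin 4, pd μ (fun y => V μ y / scl R y) x := by
    refine Finset.sum_congr rfl fun μ _ => ?_
    have he : (fun y => (scl R y)⁻¹ * V μ y) = fun y => V μ y / scl R y := by
      funext y; rw [inv_mul_eq_div]
    rw [he]
  rw [hmain, hT, mul_eq_zero]
  simp [hs.ne']
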